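/- For each fixed ρ > 0, the function λ_d(ρ) = ∫_{arccosh(d)}^{ρ} d/√(cosh²u − d²) du tends to +∞ as d → 1⁺ (for d with 1 < d < cosh ρ). -/

import Mathlib

open MeasureTheory Set Real Filter Topology intervalIntegral

noncomputable def arccosh (x : ℝ) : ℝ := Real.log (x + Real.sqrt (x ^ 2 - 1))

lemma arccosh_pos {d : ℝ} (hd : 1 < d) : 0 < arccosh d := by
  have h := Real.sqrt_nonneg (d ^ 2 - 1)
  exact Real.log_pos (by linarith)

lemma cosh_arccosh {d : ℝ} (hd : 1 ≤ d) : Real.cosh (arccosh d) = d := by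
  have hs2 : Real.sqrt (d ^ 2 - 1) ^ 2 = d ^ 2 - 1 := Real.sq_sqrt (by nlinarith)
  have hs0 : 0 ≤ Real.sqrt (d ^ 2 - 1) := Real.sqrt_nonneg _
  have ht : 0 < d + Real.sqrt (d ^ 2 - 1) := by linarith
  rw [arccosh, Real.cosh_eq, Real.exp_log ht, Real.exp_neg, Real.exp_log ht]
  field_simp
  nlinarith

lemma sinh_le_mul_cosh {u : ℝ} (hu : 0 ≤ u) : Real.sinh u ≤ u * Real.cosh u := by
  have hmono : MonotoneOn (fun y : ℝ => y * Real.cosh y - Real.sinh y) (Set.Ici 0) := by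
    apply monotoneOn_of_deriv_nonneg (convex_Ici 0)
    · fun_prop
    · apply Differentiable.differentiableOn; fun_prop
    · intro x hx
      rw [interior_Ici, Set.mem_Ioi] at hx
      have : deriv (fun y : ℝ => y * Real.cosh y - Real.sinh y) x = x * Real.sinh x := by
        rw [deriv_fun_sub (by fun_prop) (by fun_prop), deriv_fun_mul (by fun_prop) (by fun_prop)]
        simp [Real.deriv_cosh, Real.deriv_sinh]
      rw [this]
      have : 0 ≤ Real.sinh x := Real.sinh_nonneg_iff.2 hx.le
      positivity
  have h0 := hmono (Set.self_mem_Ici) (Set.mem_Ici.2 hu) hu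
  simp at h0
  linarith

lemma cosh_lower {a u : ℝ} (ha : 0 ≤ a) (h : a ≤ u) :
    Real.cosh a + Real.sinh a * (u - a) ≤ Real.cosh u := by
  have key : Real.cosh u = Real.cosh a * Real.cosh (u - a) + Real.sinh a * Real.sinh (u - a) := by
    rw [← Real.cosh_add]; ring_nf
  have h1 : (1 : ℝ) ≤ Real.cosh (u - a) := Real.one_le_cosh _
  have h2 : u - a ≤ Real.sinh (u - a) := Real.self_le_sinh_iff.2 (by linarith)
  have h3 : 0 ≤ Real.sinh a := Real.sinh_nonneg_iff.2 ha
  have h4 : 0 < Real.cosh a := Real.cosh_pos a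
  nlinarith

lemma key_lower {ρ : ℝ} (hρ : 0 < ρ) {d : ℝ} (hd : d ∈ Set.Ioo 1 (Real.cosh ρ)) :
    (Real.cosh ρ)⁻¹ * Real.log (ρ / arccosh d) ≤
      ∫ u in (arccosh d)..ρ, d / Real.sqrt (Real.cosh u ^ 2 - d ^ 2) := by
  obtain ⟨hd1, hd2⟩ := hd
  set a := arccosh d with ha_def
  have ha0 : 0 < a := arccosh_pos hd1
  have hca : Real.cosh a = d := cosh_arccosh hd1.le
  have haρ : a < ρ := by
    have h := Real.cosh_lt_cosh.1 (by rw [hca]; exact hd2 : Real.cosh a < Real.cosh ρ)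
    rwa [abs_of_pos ha0, abs_of_pos hρ] at h
  have hsa : 0 < Real.sinh a := Real.sinh_pos_iff.2 ha0
  have hcρ : 0 < Real.cosh ρ := Real.cosh_pos ρ
  set g : ℝ → ℝ := fun u => d / Real.sqrt (Real.cosh u ^ 2 - d ^ 2) with hg_def
  -- integrability of g
  have hgi : IntervalIntegrable g volume a ρ := by
    have hmaj : IntervalIntegrable
        (fun u : ℝ => (d / Real.sqrt (2 * Real.sinh a)) * (u - a) ^ (-(1/2) : ℝ)) volume a ρ := by
      have h0 : IntervalIntegrable (fun x : ℝ => x ^ (-(1/2) : ℝ)) volume 0 (ρ - a) :=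
        intervalIntegrable_rpow' (by norm_num)
      have h1 := (h0.comp_sub_right a).const_mul (d / Real.sqrt (2 * Real.sinh a))
      simpa using h1
    apply hmaj.mono_fun
    · apply Measurable.aestronglyMeasurable
      exact measurable_const.div
        ((Real.continuous_sqrt.comp ((Real.continuous_cosh.pow 2).sub continuous_const)).measurable)
    · rw [uIoc_of_le haρ.le]
      refine (ae_restrict_mem measurableSet_Ioc).mono fun u hu => ?_
      obtain ⟨hua, huρ⟩ := hu
      have hua' : 0 < u - a := by linarith
      have hcu : Real.cosh a + Real.sinh a * (u - a) ≤ Real.cosh u := cosh_lower ha0.le hua.le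
      have h1cu : (1 : ℝ) ≤ Real.cosh u := Real.one_le_cosh u
      have hkey : 2 * Real.sinh a * (u - a) ≤ Real.cosh u ^ 2 - d ^ 2 := by
        have e1 : 0 ≤ Real.cosh u - d - Real.sinh a * (u - a) := by rw [← hca]; linarith
        have e2 : 0 ≤ Real.cosh u + d := by linarith
        have e3 : 0 ≤ Real.cosh u + d - 2 := by linarith
        nlinarith [mul_nonneg e1 e2, mul_nonneg (mul_nonneg hsa.le hua'.le) e3]
      have hs1 : Real.sqrt (2 * Real.sinh a * (u - a)) ≤ Real.sqrt (Real.cosh u ^ 2 - d ^ 2) :=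
        Real.sqrt_le_sqrt hkey
      have hs2 : Real.sqrt (2 * Real.sinh a * (u - a))
          = Real.sqrt (2 * Real.sinh a) * Real.sqrt (u - a) :=
        Real.sqrt_mul (by positivity) _
      have hspos : 0 < Real.sqrt (2 * Real.sinh a) * Real.sqrt (u - a) := by positivity
      have hgle : g u ≤ (d / Real.sqrt (2 * Real.sinh a)) * (u - a) ^ (-(1/2) : ℝ) := by
        have : g u ≤ d / (Real.sqrt (2 * Real.sinh a) * Real.sqrt (u - a)) := by
          apply div_le_div_of_nonneg_left (by linarith) hspos
          rw [← hs2]; exact hs1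
        refine this.trans_eq ?_
        rw [Real.rpow_neg hua'.le, ← Real.sqrt_eq_rpow]
        field_simp
      have hg0 : 0 ≤ g u := by positivity
      simp only [Real.norm_eq_abs]
      rw [abs_of_nonneg hg0, abs_of_nonneg (by positivity)]
      exact hgle
  -- comparison function
  set f : ℝ → ℝ := fun u => (Real.cosh ρ)⁻¹ * (1 / u) with hf_def
  have hfi : IntervalIntegrable f volume a ρ := by
    apply ContinuousOn.intervalIntegrable
    apply ContinuousOn.mul continuousOn_const
    apply ContinuousOn.div continuousOn_const continuousOn_id
    intro x hx
    rw [Set.uIcc_of_le haρ.le] at hx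
    exact ne_of_gt (lt_of_lt_of_le ha0 hx.1)
  have hmono : (∫ u in a..ρ, f u) ≤ ∫ u in a..ρ, g u := by
    apply integral_mono_ae_restrict haρ.le hfi hgi
    have hne : ∀ᵐ x : ℝ ∂volume, x ≠ a := by
      rw [ae_iff]
      simpa using measure_singleton (μ := (volume : Measure ℝ)) a
    filter_upwards [ae_restrict_mem measurableSet_Icc, ae_restrict_of_ae hne] with x hx hxa
    have hax : a < x := lt_of_le_of_ne hx.1 (Ne.symm hxa)
    have hx0 : 0 < x := ha0.trans hax
    have hcd : d < Real.cosh x := by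
      rw [← hca]
      exact Real.cosh_lt_cosh.2 (by rwa [abs_of_pos ha0, abs_of_pos hx0])
    have hpos : 0 < Real.cosh x ^ 2 - d ^ 2 := by nlinarith
    have hcx : Real.cosh x ≤ Real.cosh ρ :=
      Real.cosh_le_cosh.2 (by rw [abs_of_pos hx0, abs_of_pos hρ]; exact hx.2)
    have hsh : Real.sinh x ≤ x * Real.cosh x := sinh_le_mul_cosh hx0.le
    have hsh0 : 0 ≤ Real.sinh x := Real.sinh_nonneg_iff.2 hx0.le
    have hsq : Real.cosh x ^ 2 = Real.sinh x ^ 2 + 1 := Real.cosh_sq x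
    have hub : Real.cosh x ^ 2 - d ^ 2 ≤ (x * Real.cosh ρ) ^ 2 := by
      have hle : Real.sinh x ≤ x * Real.cosh ρ := by
        refine hsh.trans ?_
        exact mul_le_mul_of_nonneg_left hcx hx0.le
      have hA : Real.sinh x ^ 2 ≤ (x * Real.cosh ρ) ^ 2 := pow_le_pow_left₀ hsh0 hle 2
      nlinarith
    have hsle : Real.sqrt (Real.cosh x ^ 2 - d ^ 2) ≤ x * Real.cosh ρ := by
      calc Real.sqrt (Real.cosh x ^ 2 - d ^ 2) ≤ Real.sqrt ((x * Real.cosh ρ) ^ 2) :=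
            Real.sqrt_le_sqrt hub
        _ = x * Real.cosh ρ := Real.sqrt_sq (by positivity)
    have hspos : 0 < Real.sqrt (Real.cosh x ^ 2 - d ^ 2) := Real.sqrt_pos.2 hpos
    calc f x = 1 / (x * Real.cosh ρ) := by rw [hf_def]; field_simp
      _ ≤ 1 / Real.sqrt (Real.cosh x ^ 2 - d ^ 2) := by
          apply one_div_le_one_div_of_le hspos hsle
      _ ≤ g x := by
          have hfin : (1:ℝ) / Real.sqrt (Real.cosh x ^ 2 - d ^ 2)
              ≤ d / Real.sqrt (Real.cosh x ^ 2 - d ^ 2) := by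
            gcongr
          exact hfin
  have hval : (∫ u in a..ρ, f u) = (Real.cosh ρ)⁻¹ * Real.log (ρ / a) := by
    rw [hf_def, intervalIntegral.integral_const_mul, integral_one_div]
    rw [Set.uIcc_of_le haρ.le]
    rintro ⟨h1, h2⟩
    linarith
  rw [← hval]
  exact hmono

/-- For fixed `ρ > 0`, `λ_d(ρ) = ∫_{arccosh d}^{ρ} d/√(cosh²u − d²) du → +∞`
as `d → 1⁺` (through `d` with `1 < d < cosh ρ`). -/
theorem stmt_4 (ρ : ℝ) (hρ : 0 < ρ) :
    Tendsto (fun d : ℝ => ∫ u in (arccosh d)..ρ, d / Real.sqrt (Real.cosh u ^ 2 - d ^ 2))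
      (𝓝[Set.Ioo 1 (Real.cosh ρ)] (1 : ℝ)) atTop := by
  have hcρ : 0 < Real.cosh ρ := Real.cosh_pos ρ
  have h1 : Tendsto arccosh (𝓝[Set.Ioo 1 (Real.cosh ρ)] 1) (𝓝[>] 0) := by
    rw [tendsto_nhdsWithin_iff]
    constructor
    · have hc : ContinuousAt arccosh 1 := by
        apply ContinuousAt.log
        · fun_prop
        · norm_num
      have hval : arccosh 1 = 0 := by simp [arccosh]
      have := hc.tendsto
      rw [hval] at this
      exact this.mono_left nhdsWithin_le_nhds
    · filter_upwards [self_mem_nhdsWithin] with d hd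
      exact arccosh_pos hd.1
  have h2 : Tendsto (fun d : ℝ => (arccosh d)⁻¹) (𝓝[Set.Ioo 1 (Real.cosh ρ)] 1) atTop :=
    h1.inv_tendsto_nhdsGT_zero
  have h3 : Tendsto (fun d : ℝ => ρ / arccosh d) (𝓝[Set.Ioo 1 (Real.cosh ρ)] 1) atTop := by
    simpa [div_eq_mul_inv] using h2.const_mul_atTop hρ
  have h4 : Tendsto (fun d : ℝ => Real.log (ρ / arccosh d))
      (𝓝[Set.Ioo 1 (Real.cosh ρ)] 1) atTop := Real.tendsto_log_atTop.comp h3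
  have h5 : Tendsto (fun d : ℝ => (Real.cosh ρ)⁻¹ * Real.log (ρ / arccosh d))
      (𝓝[Set.Ioo 1 (Real.cosh ρ)] 1) atTop := h4.const_mul_atTop (inv_pos.2 hcρ)
  apply tendsto_atTop_mono' _ _ h5
  filter_upwards [self_mem_nhdsWithin] with d hd
  exact key_lower hρ hd
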